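/- Let X be a finite multigraph with at least one perfect matching, and let X_0 be its reduction (obtained by removing every edge that lies in no perfect matching). Then every connected component Y of X_0 either (a) consists of a single edge between two distinct vertices, and that edge lies in every perfect matching of X, or (b) every edge of Y lies in some but not all perfect matchings of X. -/

import Mathlib

/-- A finite multigraph: vertices, edges, and two endpoint maps. -/
structure Multigraph where
  V : Type
  E : Type
  src : E → V
  tgt : E → V

namespace Multigraph

/-- An endpoint of an edge selected by a side: `true` selects `src`, `false` selects `tgt`. -/
def endpointAt (X : Multigraph) (p : X.E × Bool) : X.V :=
  if p.2 then X.src p.1 else X.tgt p.1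

/-- A perfect matching: a set of edges such that every vertex occurs exactly once
among the endpoints (counted with multiplicity) of edges of the matching. -/
def IsPerfectMatching (X : Multigraph) (M : Set X.E) : Prop :=
  ∀ v : X.V, ∃! p : X.E × Bool, p.1 ∈ M ∧ X.endpointAt p = v

/-- An edge is forced if it appears in every perfect matching. -/
def Forced (X : Multigraph) (e : X.E) : Prop :=
  ∀ M : Set X.E, X.IsPerfectMatching M → e ∈ M

/-- An edge is forbidden if it appears in no perfect matching. -/
def Forbidden (X : Multigraph) (e : X.E) : Prop :=
  ∀ M : Set X.E, X.IsPerfectMatching M → e ∉ M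

/-- Adjacency in the reduction `X₀` of `X` (the graph obtained by deleting all
forbidden edges): two vertices joined by a non-forbidden edge. -/
def Adj₀ (X : Multigraph) (x y : X.V) : Prop :=
  ∃ e : X.E, ¬ X.Forbidden e ∧
    ((X.src e = x ∧ X.tgt e = y) ∨ (X.src e = y ∧ X.tgt e = x))

/-- Two (non-forbidden) edges lie in the same connected component of the
reduction `X₀`. -/
def SameComp₀ (X : Multigraph) (e e' : X.E) : Prop :=
  Relation.ReflTransGen X.Adj₀ (X.src e) (X.src e')

end Multigraph

namespace Multigraph

/-- Uniqueness of matched pairs: two edges of a matching meeting at a vertex coincide. -/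
lemma touch (X : Multigraph) {M : Set X.E} (hM : X.IsPerfectMatching M)
    {e f : X.E} {b b' : Bool} (he : e ∈ M) (hf : f ∈ M)
    (h : X.endpointAt (f, b) = X.endpointAt (e, b')) : f = e ∧ b = b' := by
  obtain ⟨p, _, hp⟩ := hM (X.endpointAt (e, b'))
  have h1 := hp (f, b) ⟨hf, h⟩
  have h2 := hp (e, b') ⟨he, rfl⟩
  have := h1.trans h2.symm
  exact ⟨congrArg Prod.fst this, congrArg Prod.snd this⟩

/-- A non-forbidden edge lies in some perfect matching. -/
lemma exists_pm_of_not_forbidden (X : Multigraph) {e : X.E} (he : ¬ X.Forbidden e) :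
    ∃ M : Set X.E, X.IsPerfectMatching M ∧ e ∈ M := by
  simpa [Forbidden, not_forall] using he

/-- Non-forbidden edges are not loops. -/
lemma not_loop (X : Multigraph) {e : X.E} (he : ¬ X.Forbidden e) : X.src e ≠ X.tgt e := by
  obtain ⟨M, hM, heM⟩ := X.exists_pm_of_not_forbidden he
  intro hloop
  have h : X.endpointAt (e, false) = X.endpointAt (e, true) := by
    simp [endpointAt, hloop]
  have := (X.touch hM heM heM h).2
  simp at this

/-- A forced edge is the only non-forbidden edge incident to either of its endpoints. -/
lemma forced_isolated (X : Multigraph) {e : X.E} (hF : X.Forced e)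
    {f : X.E} (hf : ¬ X.Forbidden f)
    (hinc : X.src f = X.src e ∨ X.src f = X.tgt e ∨
            X.tgt f = X.src e ∨ X.tgt f = X.tgt e) : f = e := by
  obtain ⟨M, hM, hfM⟩ := X.exists_pm_of_not_forbidden hf
  have heM : e ∈ M := hF M hM
  rcases hinc with h | h | h | h
  · exact (X.touch hM heM hfM (b := true) (b' := true) (by simpa [endpointAt] using h)).1
  · exact (X.touch hM heM hfM (b := true) (b' := false) (by simpa [endpointAt] using h)).1
  · exact (X.touch hM heM hfM (b := false) (b' := true) (by simpa [endpointAt] using h)).1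
  · exact (X.touch hM heM hfM (b := false) (b' := false) (by simpa [endpointAt] using h)).1

/-- From an endpoint of a forced edge, the reduction reaches only its two endpoints. -/
lemma forced_reach (X : Multigraph) {e : X.E} (hF : X.Forced e) {v : X.V}
    (h : Relation.ReflTransGen X.Adj₀ (X.src e) v) : v = X.src e ∨ v = X.tgt e := by
  induction h with
  | refl => exact Or.inl rfl
  | tail _ hstep ih =>
    rename_i b c
    obtain ⟨f, hf, hends⟩ := hstep
    have hfe : f = e := by
      apply X.forced_isolated hF hf
      rcases hends with ⟨h1, _⟩ | ⟨_, h2⟩ <;> rcases ih with rfl | rfl <;> tauto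
    subst hfe
    rcases hends with ⟨_, h2⟩ | ⟨h1, _⟩
    · exact Or.inr h2.symm
    · exact Or.inl h1.symm

lemma adj₀_symm (X : Multigraph) : Symmetric X.Adj₀ := by
  intro x y ⟨e, he, h⟩
  exact ⟨e, he, h.symm⟩

end Multigraph

/-- Let `X` be a finite multigraph with at least one perfect matching,
and `X₀` its reduction (delete all forbidden edges).  Then every connected component
`Y` of `X₀` either (a) consists of a single edge between two distinct vertices, and
that edge is forced, or (b) every edge of `Y` is neither forced nor forbidden. -/
theorem reduction_components_forced_or_free
    (X : Multigraph) [Fintype X.V] [Fintype X.E]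
    (hne : ∃ M : Set X.E, X.IsPerfectMatching M) :
    ∀ e : X.E, ¬ X.Forbidden e →
      (X.Forced e ∧ X.src e ≠ X.tgt e ∧
        (∀ e' : X.E, ¬ X.Forbidden e' → X.SameComp₀ e e' → e' = e)) ∨
      (∀ e' : X.E, ¬ X.Forbidden e' → X.SameComp₀ e e' →
        ¬ X.Forced e' ∧ ¬ X.Forbidden e') := by
  intro e he
  by_cases hF : X.Forced e
  · left
    refine ⟨hF, X.not_loop he, fun e' he' hcomp => ?_⟩
    have hv := X.forced_reach hF hcomp
    exact X.forced_isolated hF he' (by tauto)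
  · right
    intro e' he' hcomp
    refine ⟨fun hF' => hF ?_, he'⟩
    have hback : Relation.ReflTransGen X.Adj₀ (X.src e') (X.src e) :=
      (@Relation.ReflTransGen.symmetric _ _ ⟨X.adj₀_symm⟩).symm _ _ hcomp
    have hv := X.forced_reach hF' hback
    have : e = e' := X.forced_isolated hF' he (by tauto)
    exact this ▸ hF'
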